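/- arXiv:2112.12079 — 2 statements merged into one kernel-verified Lean document; each statement's English description precedes it below -/
import Mathlib

section
/- Let (R,v) be a discrete valuation domain and f = a_0 + a_1x + ... + a_nx^n in R[x] with v(a_n) = 0. Suppose there is an index s in {0,...,n-1} with m_i(f) < m_s(f) for all i ≠ s (where m_i(f) = (v(a_n)-v(a_i))/(n-i)) and that v(a_s) and n-s are coprime. Then in any factorization f = g·h in R[x], one of the factors has degree at most s; equivalently max(deg g, deg h) ≥ n - s. -/
open Polynomial

open Finset

namespace NPAux

/-- The affine transform on `WithTop ℤ`. -/
def phi (N y : ℤ) (j : ℕ) (x : WithTop ℤ) : WithTop ℤ :=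
  x.map (fun t => N * t) + (((j : ℤ) * y : ℤ) : WithTop ℤ)

lemma phi_coe (N y : ℤ) (j : ℕ) (t : ℤ) :
    phi N y j (t : WithTop ℤ) = ((N * t + j * y : ℤ) : WithTop ℤ) := by
  simp only [phi, WithTop.map_coe, ← WithTop.coe_add, WithTop.coe_inj]

lemma phi_top (N y : ℤ) (j : ℕ) : phi N y j ⊤ = ⊤ := by
  simp [phi]

lemma phi_strictMono {N : ℤ} (hN : 0 < N) (y : ℤ) (j : ℕ) : StrictMono (phi N y j) := by
  intro a b hab
  induction a using WithTop.recTopCoe with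
  | top => exact absurd hab (not_top_lt)
  | coe ta =>
    induction b using WithTop.recTopCoe with
    | top =>
      rw [phi_top, phi_coe]
      exact WithTop.coe_lt_top _
    | coe tb =>
      rw [phi_coe, phi_coe, WithTop.coe_lt_coe]
      rw [WithTop.coe_lt_coe] at hab
      have : N * ta < N * tb := mul_lt_mul_of_pos_left hab hN
      omega

lemma phi_eq_top_iff {N y : ℤ} {j : ℕ} {x : WithTop ℤ} :
    phi N y j x = ⊤ ↔ x = ⊤ := by
  induction x using WithTop.recTopCoe with
  | top => simp [phi_top]
  | coe t =>
    rw [phi_coe]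
    exact iff_of_false (WithTop.coe_ne_top) (WithTop.coe_ne_top)

lemma phi_add (N y : ℤ) (a b : ℕ) (x x' : WithTop ℤ) :
    phi N y (a + b) (x + x') = phi N y a x + phi N y b x' := by
  induction x using WithTop.recTopCoe with
  | top => simp [phi_top]
  | coe t =>
    induction x' using WithTop.recTopCoe with
    | top => simp [phi_top]
    | coe t' =>
      rw [← WithTop.coe_add, phi_coe, phi_coe, phi_coe, ← WithTop.coe_add,
        WithTop.coe_inj]
      push_cast
      ring

lemma coe_mul_eq_map {c : ℤ} (hc : c ≠ 0) (x : WithTop ℤ) :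
    ((c : WithTop ℤ)) * x = x.map (fun t => c * t) := by
  induction x using WithTop.recTopCoe with
  | top =>
    rw [WithTop.map_top, WithTop.mul_top]
    exact_mod_cast hc
  | coe t => rw [WithTop.map_coe, ← WithTop.coe_mul]

variable {R : Type*} [CommRing R] [IsDomain R]

/-- The weight of the `j`-th coefficient. -/
def W (v : AddValuation R (WithTop ℤ)) (N y : ℤ) (P : R[X]) (j : ℕ) : WithTop ℤ :=
  phi N y j (v (P.coeff j))

lemma W_term (v : AddValuation R (WithTop ℤ)) (N y : ℤ) (g h : R[X]) (a b : ℕ) :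
    W v N y g a + W v N y h b = phi N y (a + b) (v (g.coeff a * h.coeff b)) := by
  rw [W, W, v.map_mul, phi_add]

lemma le_W_mul (v : AddValuation R (WithTop ℤ)) {N : ℤ} (hN : 0 < N) (y : ℤ)
    (g h : R[X]) (j : ℕ) (c : WithTop ℤ)
    (H : ∀ a b : ℕ, a + b = j → c ≤ W v N y g a + W v N y h b) :
    c ≤ W v N y (g * h) j := by
  classical
  obtain ⟨x0, hx0, hinf⟩ := Finset.exists_mem_eq_inf (antidiagonal j)
    ⟨(0, j), by simp⟩ (fun x => v (g.coeff x.1 * h.coeff x.2))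
  have hsum : (antidiagonal j).inf (fun x => v (g.coeff x.1 * h.coeff x.2))
      ≤ v ((g * h).coeff j) := by
    rw [coeff_mul]
    exact v.map_le_sum (fun i hi => Finset.inf_le hi)
  have h0 := H x0.1 x0.2 (mem_antidiagonal.mp hx0)
  rw [W_term, mem_antidiagonal.mp hx0] at h0
  calc c ≤ phi N y j (v (g.coeff x0.1 * h.coeff x0.2)) := h0
    _ ≤ phi N y j (v ((g * h).coeff j)) :=
        (phi_strictMono hN y j).monotone (hinf ▸ hsum)
    _ = W v N y (g * h) j := rfl

lemma lt_W_mul (v : AddValuation R (WithTop ℤ)) {N : ℤ} (hN : 0 < N) (y : ℤ)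
    (g h : R[X]) (j : ℕ) (c : WithTop ℤ)
    (H : ∀ a b : ℕ, a + b = j → c < W v N y g a + W v N y h b) :
    c < W v N y (g * h) j := by
  classical
  obtain ⟨x0, hx0, hinf⟩ := Finset.exists_mem_eq_inf (antidiagonal j)
    ⟨(0, j), by simp⟩ (fun x => v (g.coeff x.1 * h.coeff x.2))
  have hsum : (antidiagonal j).inf (fun x => v (g.coeff x.1 * h.coeff x.2))
      ≤ v ((g * h).coeff j) := by
    rw [coeff_mul]
    exact v.map_le_sum (fun i hi => Finset.inf_le hi)
  have h0 := H x0.1 x0.2 (mem_antidiagonal.mp hx0)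
  rw [W_term, mem_antidiagonal.mp hx0] at h0
  calc c < phi N y j (v (g.coeff x0.1 * h.coeff x0.2)) := h0
    _ ≤ phi N y j (v ((g * h).coeff j)) :=
        (phi_strictMono hN y j).monotone (hinf ▸ hsum)
    _ = W v N y (g * h) j := rfl

lemma W_mul_eq (v : AddValuation R (WithTop ℤ)) {N : ℤ} (hN : 0 < N) (y : ℤ)
    (g h : R[X]) (β δ : ℕ)
    (hne : W v N y g β + W v N y h δ ≠ ⊤)
    (H : ∀ a b : ℕ, a + b = β + δ → ¬(a = β ∧ b = δ) →
        W v N y g β + W v N y h δ < W v N y g a + W v N y h b) :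
    W v N y (g * h) (β + δ) = W v N y g β + W v N y h δ := by
  classical
  have hWt : W v N y g β + W v N y h δ = phi N y (β + δ) (v (g.coeff β * h.coeff δ)) :=
    W_term v N y g h β δ
  have hc0top : v (g.coeff β * h.coeff δ) ≠ ⊤ := by
    intro hc
    rw [hWt, hc, phi_top] at hne
    exact hne rfl
  have hterm : ∀ x ∈ (antidiagonal (β + δ)).erase (β, δ),
      v (g.coeff β * h.coeff δ) < v (g.coeff x.1 * h.coeff x.2) := by
    intro x hx
    obtain ⟨hxne, hxmem⟩ := Finset.mem_erase.mp hx
    have hlt := H x.1 x.2 (mem_antidiagonal.mp hxmem)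
      (fun hc => hxne (Prod.ext hc.1 hc.2))
    rw [hWt, W_term, mem_antidiagonal.mp hxmem] at hlt
    exact (phi_strictMono hN y (β + δ)).lt_iff_lt.mp hlt
  have hmem : ((β, δ) : ℕ × ℕ) ∈ antidiagonal (β + δ) := mem_antidiagonal.mpr rfl
  have hsum : v ((g * h).coeff (β + δ)) = v (g.coeff β * h.coeff δ) := by
    rw [coeff_mul, ← Finset.add_sum_erase _ _ hmem]
    exact v.map_add_eq_of_lt_left (v.map_sum_lt hc0top hterm)
  show phi N y (β + δ) (v ((g * h).coeff (β + δ))) = _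
  rw [hsum, hWt]

lemma exists_minimizers (v : AddValuation R (WithTop ℤ)) (N y : ℤ) (P : R[X])
    (hPtop : W v N y P P.natDegree ≠ ⊤) :
    ∃ α β : ℕ, α ≤ β ∧ β ≤ P.natDegree ∧
      W v N y P α = W v N y P β ∧
      (∀ j, W v N y P β ≤ W v N y P j) ∧
      (∀ j, β < j → W v N y P β < W v N y P j) ∧
      (∀ j, j < α → W v N y P β < W v N y P j) := by
  classical
  set d := P.natDegree with hd
  set c := (Finset.range (d + 1)).inf (W v N y P) with hc
  have hWtop : ∀ j, d < j → W v N y P j = ⊤ := by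
    intro j hj
    have h0 : P.coeff j = 0 := coeff_eq_zero_of_natDegree_lt hj
    rw [W, h0, v.map_zero, phi_top]
  have hcle : ∀ j, c ≤ W v N y P j := by
    intro j
    by_cases hj : j ≤ d
    · exact Finset.inf_le (mem_range.mpr (by omega))
    · rw [hWtop j (by omega)]; exact le_top
  have hctop : c ≠ ⊤ := by
    intro hc'
    have := hcle d
    rw [hc'] at this
    exact hPtop (top_le_iff.mp this)
  set T := (Finset.range (d + 1)).filter (fun j => W v N y P j = c) with hT
  have hTne : T.Nonempty := by
    obtain ⟨i, hi, hieq⟩ := Finset.exists_mem_eq_inf (Finset.range (d + 1))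
      ⟨0, mem_range.mpr (Nat.succ_pos d)⟩ (W v N y P)
    exact ⟨i, Finset.mem_filter.mpr ⟨hi, hieq.symm⟩⟩
  have hβT := T.max'_mem hTne
  have hαT := T.min'_mem hTne
  obtain ⟨hβr, hβc⟩ := Finset.mem_filter.mp hβT
  obtain ⟨hαr, hαc⟩ := Finset.mem_filter.mp hαT
  have hstrict : ∀ j, W v N y P j ≠ c → c < W v N y P j :=
    fun j hj => lt_of_le_of_ne (hcle j) (Ne.symm hj)
  have hβd : T.max' hTne ≤ d := by have := Finset.mem_range.mp hβr; omega
  have hαβ : T.min' hTne ≤ T.max' hTne := Finset.min'_le T _ hβT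
  refine ⟨T.min' hTne, T.max' hTne, hαβ, hβd, hαc.trans hβc.symm, ?_, ?_, ?_⟩
  · intro j; rw [hβc]; exact hcle j
  · intro j hj
    rw [hβc]
    apply hstrict
    intro heq
    by_cases hjd : j ≤ d
    · exact absurd (Finset.le_max' T j (Finset.mem_filter.mpr
        ⟨Finset.mem_range.mpr (by omega), heq⟩)) (by omega)
    · rw [hWtop j (by omega)] at heq
      exact hctop heq.symm
  · intro j hj
    rw [hβc]
    apply hstrict
    intro heq
    exact absurd (Finset.min'_le T j (Finset.mem_filter.mpr
      ⟨Finset.mem_range.mpr (by omega), heq⟩)) (by omega)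

end NPAux

open NPAux

/-- If `v(aₙ) = 0`, `mᵢ(f) < mₛ(f)` for all `i ≠ s` (encoded as `(n-i)·v(aₛ) < (n-s)·v(aᵢ)`,
using `v(aₙ)=0`), and `v(aₛ)` is coprime to `n - s`, then any factorization `f = g·h` in
`R[x]` has a factor of degree at most `s`; equivalently `max(deg g, deg h) ≥ n - s`. -/
theorem factor_degree_of_coprime
    {R : Type*} [CommRing R] [IsDomain R]
    (v : AddValuation R (WithTop ℤ))
    (hdisc : ∀ m : ℤ, ∃ r : R, v r = (m : WithTop ℤ))
    (f : R[X]) (n s : ℕ) (hdeg : f.natDegree = n) (hs : s < n)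
    (hlead : v (f.coeff n) = 0)
    (ys : ℤ) (hys : v (f.coeff s) = (ys : WithTop ℤ))
    (hslope : ∀ i < n, i ≠ s →
      (((n : ℤ) - i : ℤ) : WithTop ℤ) * v (f.coeff s)
        < (((n : ℤ) - s : ℤ) : WithTop ℤ) * v (f.coeff i))
    (hcop : Int.gcd ys ((n : ℤ) - s) = 1) :
    ∀ g h : R[X], f = g * h →
      min g.natDegree h.natDegree ≤ s ∧ n - s ≤ max g.natDegree h.natDegree := by
  classical
  intro g h hgh
  set N : ℤ := (n : ℤ) - s with hN
  have hNpos : 0 < N := by rw [hN]; exact sub_pos.mpr (by exact_mod_cast hs)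
  set p := g.natDegree with hp
  set q := h.natDegree with hq
  have htopne : (⊤ : WithTop ℤ) ≠ (0 : WithTop ℤ) := by simp
  have hfn : f.coeff n ≠ 0 := by
    intro h0
    rw [h0, v.map_zero] at hlead
    exact htopne hlead
  have hf0 : f ≠ 0 := fun h0 => hfn (by simp [h0])
  have hg0 : g ≠ 0 := by rintro rfl; rw [zero_mul] at hgh; exact hf0 hgh
  have hh0 : h ≠ 0 := by rintro rfl; rw [mul_zero] at hgh; exact hf0 hgh
  have hpq : p + q = n := by rw [hp, hq, ← natDegree_mul hg0 hh0, ← hgh, hdeg]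
  have hlc : g.coeff p * h.coeff q = f.coeff n := by
    have h1 := coeff_mul_degree_add_degree g h
    rw [hgh, ← hpq]
    exact h1.symm
  have hvlc : v (g.coeff p) + v (h.coeff q) = 0 := by
    rw [← v.map_mul, hlc, hlead]
  have hgp_ne : v (g.coeff p) ≠ ⊤ := by
    intro ht; rw [ht, top_add] at hvlc; exact htopne hvlc
  have hhq_ne : v (h.coeff q) ≠ ⊤ := by
    intro ht; rw [ht, add_top] at hvlc; exact htopne hvlc
  have hlead' : v (f.coeff n) = ((0 : ℤ) : WithTop ℤ) := by rw [hlead]; norm_cast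
  -- weight facts for f
  have hWfs : W v N ys f s = (((n : ℤ) * ys : ℤ) : WithTop ℤ) := by
    rw [W, hys, phi_coe, WithTop.coe_inj, hN]; ring
  have hWfn : W v N ys f n = (((n : ℤ) * ys : ℤ) : WithTop ℤ) := by
    rw [W, hlead', phi_coe, WithTop.coe_inj]; ring
  have hWfgt : ∀ j : ℕ, j ≠ s → j ≠ n → (((n : ℤ) * ys : ℤ) : WithTop ℤ) < W v N ys f j := by
    intro j hjs hjn
    rcases lt_or_gt_of_ne hjn with hlt | hgt
    · have hsl := hslope j hlt hjs
      rw [hys, ← WithTop.coe_mul] at hsl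
      rw [coe_mul_eq_map hNpos.ne' (v (f.coeff j))] at hsl
      calc (((n : ℤ) * ys : ℤ) : WithTop ℤ)
          = (((((n : ℤ) - j) * ys + (j : ℤ) * ys) : ℤ) : WithTop ℤ) := by
            rw [WithTop.coe_inj]; ring
        _ = (((((n : ℤ) - j) * ys) : ℤ) : WithTop ℤ) + (((j : ℤ) * ys : ℤ) : WithTop ℤ) :=
            WithTop.coe_add _ _
        _ < (v (f.coeff j)).map (fun t => N * t) + (((j : ℤ) * ys : ℤ) : WithTop ℤ) :=
            WithTop.add_lt_add_right WithTop.coe_ne_top hsl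
        _ = W v N ys f j := rfl
    · have h0 : f.coeff j = 0 := coeff_eq_zero_of_natDegree_lt (by omega)
      rw [W, h0, v.map_zero, phi_top]
      exact WithTop.coe_lt_top _
  have hWfge : ∀ j : ℕ, (((n : ℤ) * ys : ℤ) : WithTop ℤ) ≤ W v N ys f j := by
    intro j
    by_cases h1 : j = s
    · rw [h1, hWfs]
    · by_cases h2 : j = n
      · rw [h2, hWfn]
      · exact (hWfgt j h1 h2).le
  -- minimizers for g and h
  have hWgp_ne : W v N ys g p ≠ ⊤ := by
    rw [W]; exact fun ht => hgp_ne (phi_eq_top_iff.mp ht)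
  have hWhq_ne : W v N ys h q ≠ ⊤ := by
    rw [W]; exact fun ht => hhq_ne (phi_eq_top_iff.mp ht)
  obtain ⟨a1, b1, ha1b1, hb1p, hWa1, hgle, hgmax, hgmin⟩ := exists_minimizers v N ys g hWgp_ne
  obtain ⟨a2, b2, ha2b2, hb2q, hWa2, hhle, hhmax, hhmin⟩ := exists_minimizers v N ys h hWhq_ne
  have hcg_ne : W v N ys g b1 ≠ ⊤ := ne_top_of_le_ne_top hWgp_ne (hgle p)
  have hch_ne : W v N ys h b2 ≠ ⊤ := ne_top_of_le_ne_top hWhq_ne (hhle q)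
  -- step A : cg + ch ≤ n ys
  have hA : W v N ys g b1 + W v N ys h b2 ≤ (((n : ℤ) * ys : ℤ) : WithTop ℤ) := by
    have h1 : W v N ys g b1 + W v N ys h b2 ≤ W v N ys g p + W v N ys h q :=
      add_le_add (hgle p) (hhle q)
    rw [W_term v N ys g h p q, hpq, hlc, hlead', phi_coe] at h1
    have h2 : N * 0 + (n : ℤ) * ys = (n : ℤ) * ys := by ring
    rwa [h2] at h1
  have hpair_max : ∀ a b : ℕ, b1 < a ∨ b2 < b →
      W v N ys g b1 + W v N ys h b2 < W v N ys g a + W v N ys h b := by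
    rintro a b (hc | hc)
    · exact WithTop.add_lt_add_of_lt_of_le hch_ne (hgmax a hc) (hhle b)
    · exact WithTop.add_lt_add_of_le_of_lt hcg_ne (hgle a) (hhmax b hc)
  have hpair_min : ∀ a b : ℕ, a < a1 ∨ b < a2 →
      W v N ys g b1 + W v N ys h b2 < W v N ys g a + W v N ys h b := by
    rintro a b (hc | hc)
    · exact WithTop.add_lt_add_of_lt_of_le hch_ne (hgmin a hc) (hhle b)
    · exact WithTop.add_lt_add_of_le_of_lt hcg_ne (hgle a) (hhmin b hc)
  -- step B : value at b1 + b2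
  have hB : W v N ys f (b1 + b2) = W v N ys g b1 + W v N ys h b2 := by
    rw [hgh]
    exact W_mul_eq v hNpos ys g h b1 b2 (WithTop.add_ne_top.mpr ⟨hcg_ne, hch_ne⟩)
      (fun a b hab hne => hpair_max a b (by omega))
  have hsum_eq : W v N ys g b1 + W v N ys h b2 = (((n : ℤ) * ys : ℤ) : WithTop ℤ) :=
    le_antisymm hA (hB ▸ hWfge (b1 + b2))
  -- step C : n ≤ b1 + b2, hence b1 = p, b2 = q
  have hC : ∀ j, b1 + b2 < j → (((n : ℤ) * ys : ℤ) : WithTop ℤ) < W v N ys f j := by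
    intro j hj
    rw [hgh, ← hsum_eq]
    exact lt_W_mul v hNpos ys g h j _ (fun a b hab => hpair_max a b (by omega))
  have hnle : n ≤ b1 + b2 := by
    by_contra hcon
    have := hC n (by omega)
    rw [hWfn] at this
    exact lt_irrefl _ this
  have hb1 : b1 = p := by omega
  have hb2 : b2 = q := by omega
  -- step D : value at a1 + a2, hence a1 + a2 = s
  have hD : W v N ys f (a1 + a2) = W v N ys g b1 + W v N ys h b2 := by
    rw [hgh]
    have hEq := W_mul_eq v hNpos ys g h a1 a2
      (by rw [hWa1, hWa2]; exact WithTop.add_ne_top.mpr ⟨hcg_ne, hch_ne⟩)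
      (by
        intro a b hab hne
        rw [hWa1, hWa2]
        exact hpair_min a b (by omega))
    rw [hWa1, hWa2] at hEq
    exact hEq
  have hDeq : W v N ys f (a1 + a2) = (((n : ℤ) * ys : ℤ) : WithTop ℤ) := hD.trans hsum_eq
  have hE : ∀ j, j < a1 + a2 → (((n : ℤ) * ys : ℤ) : WithTop ℤ) < W v N ys f j := by
    intro j hj
    rw [hgh, ← hsum_eq]
    exact lt_W_mul v hNpos ys g h j _ (fun a b hab => hpair_min a b (by omega))
  have hsle : a1 + a2 ≤ s := by
    by_contra hcon
    have := hE s (by omega)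
    rw [hWfs] at this
    exact lt_irrefl _ this
  have ha1a2 : a1 + a2 = s := by
    by_contra hne'
    have := hWfgt (a1 + a2) hne' (by omega)
    rw [hDeq] at this
    exact lt_irrefl _ this
  -- step E : divisibility
  obtain ⟨tp, htp⟩ := WithTop.ne_top_iff_exists.mp hgp_ne
  obtain ⟨tq, htq⟩ := WithTop.ne_top_iff_exists.mp hhq_ne
  have hga1_ne : v (g.coeff a1) ≠ ⊤ := by
    intro ht
    apply hcg_ne
    rw [← hWa1, W, ht, phi_top]
  have hha2_ne : v (h.coeff a2) ≠ ⊤ := by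
    intro ht
    apply hch_ne
    rw [← hWa2, W, ht, phi_top]
  obtain ⟨t1, ht1⟩ := WithTop.ne_top_iff_exists.mp hga1_ne
  obtain ⟨t2, ht2⟩ := WithTop.ne_top_iff_exists.mp hha2_ne
  have heqg : W v N ys g a1 = W v N ys g p := by rw [hWa1, hb1]
  have heqh : W v N ys h a2 = W v N ys h q := by rw [hWa2, hb2]
  rw [W, W, ← htp, ← ht1, phi_coe, phi_coe, WithTop.coe_inj] at heqg
  rw [W, W, ← htq, ← ht2, phi_coe, phi_coe, WithTop.coe_inj] at heqh
  have hdvd1 : N ∣ ((p : ℤ) - a1) * ys := ⟨t1 - tp, by linear_combination (-1 : ℤ) * heqg⟩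
  have hdvd2 : N ∣ ((q : ℤ) - a2) * ys := ⟨t2 - tq, by linear_combination (-1 : ℤ) * heqh⟩
  have hco : IsCoprime N ys := by
    rw [Int.isCoprime_iff_gcd_eq_one, Int.gcd_comm]
    exact hcop
  have hdv1 : N ∣ (p : ℤ) - a1 := hco.dvd_of_dvd_mul_right hdvd1
  have hdv2 : N ∣ (q : ℤ) - a2 := hco.dvd_of_dvd_mul_right hdvd2
  have hcase1 : (p : ℤ) - a1 = 0 ∨ N ≤ (p : ℤ) - a1 := by
    rcases eq_or_lt_of_le (show (0 : ℤ) ≤ (p : ℤ) - a1 by omega) with heq | hlt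
    · exact Or.inl heq.symm
    · exact Or.inr (Int.le_of_dvd hlt hdv1)
  rcases hcase1 with h1 | h1
  · have hple : p ≤ s := by omega
    exact ⟨min_le_iff.mpr (Or.inl hple), le_max_iff.mpr (Or.inr (by omega))⟩
  · have hqle : q ≤ s := by omega
    exact ⟨min_le_iff.mpr (Or.inr hqle), le_max_iff.mpr (Or.inl (by omega))⟩
end

section
/- Let (R,v) be a discrete valuation domain and f = a_0 + a_1x + ... + a_nx^n in R[x] with v(a_n) = 0. Suppose there is an index s in {0,...,n-1} with m_i(f) < m_s(f) for all i ≠ s, where m_i(f) = (v(a_n)-v(a_i))/(n-i), and set d_s = gcd(n-s, v(a_s)). Then any factorization f = g·h in R[x] satisfies max(deg g, deg h) ≥ (n-s)/d_s. -/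
open Polynomial

section AuxVal

private lemma wt_top {k : ℕ} (hk : k ≠ 0) : k • (⊤ : WithTop ℤ) = ⊤ := by
  obtain ⟨k, rfl⟩ := Nat.exists_eq_succ_of_ne_zero hk
  rw [succ_nsmul]
  simp

private lemma wt_coe (k : ℕ) (x : ℤ) :
    k • ((x : WithTop ℤ)) = (((k : ℤ) * x : ℤ) : WithTop ℤ) := by
  induction k with
  | zero => simp
  | succ m ih =>
    rw [succ_nsmul, ih, ← WithTop.coe_add]
    congr 1
    push_cast
    ring

private lemma wt_mul_eq_smul {k : ℕ} (hk : k ≠ 0) (x : WithTop ℤ) :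
    (((k : ℤ) : ℤ) : WithTop ℤ) * x = k • x := by
  cases x with
  | top =>
    rw [wt_top hk, WithTop.mul_top]
    exact_mod_cast hk
  | coe x =>
    rw [wt_coe, ← WithTop.coe_mul]

private lemma wt_smul_lt {k : ℕ} {x y : WithTop ℤ} (h : k • x < k • y) : x < y := by
  by_contra hxy
  exact absurd (nsmul_le_nsmul_right (not_lt.mp hxy) k) (not_le.mpr h)

private lemma wt_smul_ne_top {k : ℕ} {x : WithTop ℤ} (hk : k ≠ 0) (h : k • x ≠ ⊤) : x ≠ ⊤ := by
  intro hx
  exact h (hx ▸ wt_top hk)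

variable {R : Type*} [CommRing R] (v : AddValuation R (WithTop ℤ))

private lemma val_sum_ge {ι : Type*} [DecidableEq ι] (S : Finset ι) (t : ι → R)
    {C : WithTop ℤ} (h : ∀ j ∈ S, C ≤ v (t j)) : C ≤ v (∑ j ∈ S, t j) := by
  induction S using Finset.induction_on with
  | empty => simp [AddValuation.map_zero]
  | @insert a s ha ih =>
    rw [Finset.sum_insert ha]
    refine le_trans (le_min (h a (Finset.mem_insert_self _ _))
      (ih fun j hj => h j (Finset.mem_insert_of_mem hj))) (v.map_add _ _)

private lemma val_sum_gt {ι : Type*} [DecidableEq ι] (S : Finset ι) (t : ι → R)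
    {C : WithTop ℤ} (hC : C ≠ ⊤) (h : ∀ j ∈ S, C < v (t j)) : C < v (∑ j ∈ S, t j) := by
  induction S using Finset.induction_on with
  | empty => simp only [Finset.sum_empty, AddValuation.map_zero]; exact lt_top_iff_ne_top.mpr hC
  | @insert a s ha ih =>
    rw [Finset.sum_insert ha]
    refine lt_of_lt_of_le (lt_min (h a (Finset.mem_insert_self _ _))
      (ih fun j hj => h j (Finset.mem_insert_of_mem hj))) (v.map_add _ _)

private lemma val_sum_eq {ι : Type*} [DecidableEq ι] (S : Finset ι) (t : ι → R)
    {j0 : ι} (hj0 : j0 ∈ S) (hfin : v (t j0) ≠ ⊤)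
    (h : ∀ j ∈ S, j ≠ j0 → v (t j0) < v (t j)) :
    v (∑ j ∈ S, t j) = v (t j0) := by
  rw [← Finset.add_sum_erase S t hj0]
  exact v.map_add_eq_of_lt_left (val_sum_gt v _ _ hfin
    (fun j hj => h j (Finset.mem_of_mem_erase hj) (Finset.ne_of_mem_erase hj)))

private lemma exists_AB (w : ℕ → WithTop ℤ) (N : ℕ) (hw : ∀ j, N < j → w j = ⊤) :
    ∃ A B : ℕ, A ≤ B ∧ B ≤ N ∧ (∀ j, w A ≤ w j) ∧ w B = w A ∧
      (∀ j, j < A → w A < w j) ∧ (∀ j, B < j → w A ≠ ⊤ → w A < w j) := by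
  classical
  set M := (Finset.range (N + 1)).inf w with hM
  have hMle : ∀ j, M ≤ w j := by
    intro j
    rcases le_or_gt j N with hj | hj
    · exact Finset.inf_le (Finset.mem_range.mpr (by omega))
    · rw [hw j hj]; exact le_top
  set T := (Finset.range (N + 1)).filter (fun j => w j = M) with hT
  have hTne : T.Nonempty := by
    obtain ⟨i, hi, hieq⟩ := Finset.exists_mem_eq_inf (Finset.range (N + 1)) ⟨0, by simp⟩ w
    exact ⟨i, Finset.mem_filter.mpr ⟨hi, hieq.symm⟩⟩
  set A := T.min' hTne with hA
  set B := T.max' hTne with hB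
  have hAmem := T.min'_mem hTne
  have hBmem := T.max'_mem hTne
  have hAval : w A = M := (Finset.mem_filter.mp hAmem).2
  have hBval : w B = M := (Finset.mem_filter.mp hBmem).2
  have hBle : B ≤ N := by
    have := (Finset.mem_filter.mp hBmem).1
    rw [Finset.mem_range] at this; omega
  refine ⟨A, B, T.min'_le B hBmem, hBle, fun j => hAval ▸ hMle j, hBval.trans hAval.symm,
    ?_, ?_⟩
  · intro j hj
    rw [hAval]
    refine lt_of_le_of_ne (hMle j) (fun e => ?_)
    have hjmem : j ∈ T := Finset.mem_filter.mpr
      ⟨Finset.mem_range.mpr (by have := T.min'_le B hBmem; omega), e.symm⟩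
    exact absurd (T.min'_le j hjmem) (not_le.mpr hj)
  · intro j hj htop
    rw [hAval] at htop ⊢
    rcases le_or_gt j N with hjN | hjN
    · refine lt_of_le_of_ne (hMle j) (fun e => ?_)
      have hjmem : j ∈ T := Finset.mem_filter.mpr ⟨Finset.mem_range.mpr (by omega), e.symm⟩
      exact absurd (T.le_max' j hjmem) (not_le.mpr hj)
    · rw [hw j hjN]
      exact lt_top_iff_ne_top.mpr htop

private lemma dvd_sub_of_eq {ns A B : ℕ} {ys xA xB : ℤ} (hns : ns ≠ 0) (hAB : A ≤ B)
    (heq : (ns : ℤ) * xA + (A : ℤ) * ys = (ns : ℤ) * xB + (B : ℤ) * ys) :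
    ns / Int.gcd (ns : ℤ) ys ∣ B - A := by
  set d := Int.gcd (ns : ℤ) ys with hd
  have hd0 : 0 < d := by
    rcases Nat.eq_zero_or_pos d with h0 | h0
    · exfalso
      have := Int.gcd_eq_zero_iff.mp h0
      exact hns (by exact_mod_cast this.1)
    · exact h0
  have hdns : (d : ℤ) ∣ (ns : ℤ) := Int.gcd_dvd_left _ _
  have hdys : (d : ℤ) ∣ ys := Int.gcd_dvd_right _ _
  have hdns' : d ∣ ns := Int.natCast_dvd_natCast.mp hdns
  set q := ns / d with hq
  have hnsq : (ns : ℤ) = (d : ℤ) * q := by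
    have := Nat.mul_div_cancel' hdns'
    exact_mod_cast this.symm
  have hqns : (ns : ℤ) / (d : ℤ) = (q : ℤ) := by
    rw [hnsq]
    exact Int.mul_ediv_cancel_left _ (by exact_mod_cast hd0.ne')
  have hcop : Int.gcd ((q : ℤ)) (ys / (d : ℤ)) = 1 := by
    have h2 := Int.gcd_div_gcd_div_gcd (i := (ns : ℤ)) (j := ys) (by exact_mod_cast hd0)
    rwa [hqns] at h2
  obtain ⟨y', hy'⟩ := hdys
  have hy'd : ys / (d : ℤ) = y' := by
    rw [hy', Int.mul_ediv_cancel_left _ (by exact_mod_cast hd0.ne')]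
  have key : (q : ℤ) * (xA - xB) = ((B : ℤ) - A) * y' := by
    apply mul_left_cancel₀ (show (d : ℤ) ≠ 0 by exact_mod_cast hd0.ne')
    calc (d : ℤ) * ((q : ℤ) * (xA - xB)) = (ns : ℤ) * (xA - xB) := by rw [hnsq]; ring
      _ = ((B : ℤ) - A) * ys := by linarith [heq]
      _ = (d : ℤ) * (((B : ℤ) - A) * y') := by rw [hy']; ring
  have hdvd : (q : ℤ) ∣ ((B : ℤ) - A) * y' := ⟨xA - xB, key.symm⟩
  have : (q : ℤ) ∣ ((B : ℤ) - A) := by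
    refine Int.dvd_of_dvd_mul_left_of_gcd_one hdvd ?_
    rwa [hy'd] at hcop
  have : (q : ℤ) ∣ ((B - A : ℕ) : ℤ) := by
    rwa [Nat.cast_sub hAB]
  exact_mod_cast this

end AuxVal

/-- **Theorem 2.** If `v(aₙ) = 0` and `mᵢ(f) < mₛ(f)` for all `i ≠ s` (encoded as
`(n-i)·v(aₛ) < (n-s)·v(aᵢ)`, using `v(aₙ)=0`), and `dₛ = gcd(n-s, v(aₛ))`, then any
factorization `f = g·h` in `R[x]` satisfies `max(deg g, deg h) ≥ (n-s)/dₛ`. -/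
theorem max_degree_ge
    {R : Type*} [CommRing R] [IsDomain R]
    (v : AddValuation R (WithTop ℤ))
    (hdisc : ∀ m : ℤ, ∃ r : R, v r = (m : WithTop ℤ))
    (f : R[X]) (n s : ℕ) (hdeg : f.natDegree = n) (hs : s < n)
    (hlead : v (f.coeff n) = 0)
    (ys : ℤ) (hys : v (f.coeff s) = (ys : WithTop ℤ))
    (hslope : ∀ i < n, i ≠ s →
      (((n : ℤ) - i : ℤ) : WithTop ℤ) * v (f.coeff s)
        < (((n : ℤ) - s : ℤ) : WithTop ℤ) * v (f.coeff i)) :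
    ∀ g h : R[X], f = g * h →
      (n - s) / Int.gcd ((n : ℤ) - s) ys ≤ max g.natDegree h.natDegree := by
  classical
  intro g h hgh
  set ns := n - s with hnsdef
  have hns0 : ns ≠ 0 := Nat.sub_ne_zero_of_lt hs
  have hnscast : ((n : ℤ) - s) = (ns : ℤ) := by
    rw [hnsdef]; push_cast [Nat.cast_sub hs.le]; ring
  -- weight function
  set W : R[X] → ℕ → WithTop ℤ :=
    fun p j => ns • v (p.coeff j) + (((j : ℤ) * ys : ℤ) : WithTop ℤ) with hW
  -- basic values of W f
  have hWfn : W f n = (((n : ℤ) * ys : ℤ) : WithTop ℤ) := by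
    rw [hW]; dsimp only
    rw [hlead, smul_zero, zero_add]
  have hWfs : W f s = (((n : ℤ) * ys : ℤ) : WithTop ℤ) := by
    rw [hW]; dsimp only
    rw [hys, wt_coe, ← WithTop.coe_add]
    congr 1
    rw [← hnscast]; ring
  have hWfother : ∀ i, i ≠ s → i ≠ n → (((n : ℤ) * ys : ℤ) : WithTop ℤ) < W f i := by
    intro i his hin
    rcases lt_or_gt_of_ne (fun hi : i = n => hin hi) with hi | hi
    · have h1 := hslope i hi his
      rw [hys, ← WithTop.coe_mul, hnscast, wt_mul_eq_smul hns0] at h1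
      have h2 := (WithTop.add_lt_add_iff_right
        (z := (((i : ℤ) * ys : ℤ) : WithTop ℤ)) (WithTop.coe_ne_top)).mpr h1
      rw [hW]; dsimp only
      refine lt_of_le_of_lt (le_of_eq ?_) h2
      rw [← WithTop.coe_add]
      congr 1
      ring
    · have : f.coeff i = 0 := coeff_eq_zero_of_natDegree_lt (by omega)
      rw [hW]; dsimp only
      rw [this, AddValuation.map_zero, wt_top hns0, top_add]
      exact WithTop.coe_lt_top _
  have hWfge : ∀ j, (((n : ℤ) * ys : ℤ) : WithTop ℤ) ≤ W f j := by
    intro j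
    rcases eq_or_ne j s with rfl | hjs
    · exact hWfs.ge
    rcases eq_or_ne j n with rfl | hjn
    · exact hWfn.ge
    · exact (hWfother j hjs hjn).le
  -- W vanishes above degree
  have hWtop : ∀ p : R[X], ∀ j, p.natDegree < j → W p j = ⊤ := by
    intro p j hj
    rw [hW]; dsimp only
    rw [coeff_eq_zero_of_natDegree_lt hj, AddValuation.map_zero, wt_top hns0, top_add]
  obtain ⟨Ag, Bg, hABg, hBgdeg, hgmin, hgB, hgA, hgB'⟩ := exists_AB (W g) _ (hWtop g)
  obtain ⟨Ah, Bh, hABh, hBhdeg, hhmin, hhB, hhA, hhB'⟩ := exists_AB (W h) _ (hWtop h)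
  -- pair identity
  have hpair : ∀ m k : ℕ, k ≤ m →
      W g k + W h (m - k)
        = ns • v (g.coeff k * h.coeff (m - k)) + (((m : ℤ) * ys : ℤ) : WithTop ℤ) := by
    intro m k hk
    rw [hW]; dsimp only
    rw [v.map_mul, smul_add, add_add_add_comm, ← WithTop.coe_add]
    congr 2
    push_cast [Nat.cast_sub hk]
    ring
  -- coefficient of product as sum
  have hcoeff : ∀ m : ℕ,
      f.coeff m = ∑ k ∈ Finset.range (m + 1), g.coeff k * h.coeff (m - k) := by
    intro m
    rw [hgh, coeff_mul, Finset.Nat.sum_antidiagonal_eq_sum_range_succ_mk]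
  have hWf : ∀ m : ℕ, W f m = ns • v (f.coeff m) + (((m : ℤ) * ys : ℤ) : WithTop ℤ) := by
    intro m; rw [hW]
  -- lower bound: W f m ≥ M for all m
  have key_ge : ∀ m : ℕ, W g Ag + W h Ah ≤ W f m := by
    intro m
    obtain ⟨k0, hk0mem, hk0⟩ := Finset.exists_mem_eq_inf (Finset.range (m + 1))
      ⟨0, by simp⟩ (fun k => v (g.coeff k * h.coeff (m - k)))
    have hk0le : k0 ≤ m := by have := Finset.mem_range.mp hk0mem; omega
    have hsum : v (g.coeff k0 * h.coeff (m - k0)) ≤ v (f.coeff m) := by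
      rw [hcoeff m]
      refine val_sum_ge v _ _ (fun j hj => ?_)
      rw [← hk0]
      exact Finset.inf_le hj
    calc W g Ag + W h Ah ≤ W g k0 + W h (m - k0) :=
          add_le_add (hgmin k0) (hhmin (m - k0))
      _ = ns • v (g.coeff k0 * h.coeff (m - k0)) + (((m : ℤ) * ys : ℤ) : WithTop ℤ) :=
          hpair m k0 hk0le
      _ ≤ ns • v (f.coeff m) + (((m : ℤ) * ys : ℤ) : WithTop ℤ) :=
          add_le_add_left (nsmul_le_nsmul_right hsum ns) _
      _ = W f m := (hWf m).symm
  have hMle : W g Ag + W h Ah ≤ (((n : ℤ) * ys : ℤ) : WithTop ℤ) := hWfn ▸ key_ge n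
  have hMne : W g Ag + W h Ah ≠ ⊤ := fun e => by
    rw [e] at hMle
    exact WithTop.coe_ne_top (top_le_iff.mp hMle)
  have hMgne : W g Ag ≠ ⊤ := (WithTop.add_ne_top.mp hMne).1
  have hMhne : W h Ah ≠ ⊤ := (WithTop.add_ne_top.mp hMne).2
  -- key equality lemma
  have key_eq : ∀ m j0 : ℕ, j0 ≤ m →
      (∀ k ∈ Finset.range (m + 1), k ≠ j0 →
        W g j0 + W h (m - j0) < W g k + W h (m - k)) →
      W g j0 + W h (m - j0) ≠ ⊤ →
      W f m = W g j0 + W h (m - j0) := by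
    intro m j0 hj0 hstrict hne
    have hj0mem : j0 ∈ Finset.range (m + 1) := Finset.mem_range.mpr (by omega)
    have hvne : v (g.coeff j0 * h.coeff (m - j0)) ≠ ⊤ := by
      intro e
      rw [hpair m j0 hj0, e, wt_top hns0, top_add] at hne
      exact hne rfl
    have hvs : ∀ k ∈ Finset.range (m + 1), k ≠ j0 →
        v (g.coeff j0 * h.coeff (m - j0)) < v (g.coeff k * h.coeff (m - k)) := by
      intro k hk hkne
      have hkm : k ≤ m := by have := Finset.mem_range.mp hk; omega
      have := hstrict k hk hkne
      rw [hpair m j0 hj0, hpair m k hkm] at this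
      exact wt_smul_lt ((WithTop.add_lt_add_iff_right WithTop.coe_ne_top).mp this)
    have := val_sum_eq v (Finset.range (m + 1)) (fun k => g.coeff k * h.coeff (m - k))
      hj0mem hvne hvs
    rw [hWf m, hcoeff m, this, ← hpair m j0 hj0]
  -- strict lower bound below A-sum and above B-sum
  have key_gt : ∀ m : ℕ,
      (∀ k ∈ Finset.range (m + 1), W g Ag + W h Ah < W g k + W h (m - k)) →
      W g Ag + W h Ah < W f m := by
    intro m hstrict
    obtain ⟨k0, hk0mem, hk0⟩ := Finset.exists_mem_eq_inf (Finset.range (m + 1))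
      ⟨0, by simp⟩ (fun k => v (g.coeff k * h.coeff (m - k)))
    have hk0le : k0 ≤ m := by have := Finset.mem_range.mp hk0mem; omega
    have hsum : v (g.coeff k0 * h.coeff (m - k0)) ≤ v (f.coeff m) := by
      rw [hcoeff m]
      refine val_sum_ge v _ _ (fun j hj => ?_)
      rw [← hk0]
      exact Finset.inf_le hj
    calc W g Ag + W h Ah < W g k0 + W h (m - k0) := hstrict k0 hk0mem
      _ = ns • v (g.coeff k0 * h.coeff (m - k0)) + _ := hpair m k0 hk0le
      _ ≤ ns • v (f.coeff m) + (((m : ℤ) * ys : ℤ) : WithTop ℤ) :=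
          add_le_add_left (nsmul_le_nsmul_right hsum ns) _
      _ = W f m := (hWf m).symm
  -- A-sum attains
  have hAeq : W f (Ag + Ah) = W g Ag + W h Ah := by
    have h0 : Ag + Ah - Ag = Ah := by omega
    refine (key_eq (Ag + Ah) Ag (by omega) (fun k hk hkne => ?_)
      (by rw [h0]; exact hMne)).trans (by rw [h0])
    rw [h0]
    rcases lt_or_gt_of_ne hkne with hlt | hgt
    · exact WithTop.add_lt_add_of_lt_of_le hMhne (hgA k hlt) (hhmin _)
    · have hk' : Ag + Ah - k < Ah := by
        have := Finset.mem_range.mp hk; omega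
      exact WithTop.add_lt_add_of_le_of_lt hMgne (hgmin k) (hhA _ hk')
  -- B-sum attains
  have hMB : W g Bg + W h Bh = W g Ag + W h Ah := by rw [hgB, hhB]
  have hBeq : W f (Bg + Bh) = W g Ag + W h Ah := by
    have h0 : Bg + Bh - Bg = Bh := by omega
    refine (key_eq (Bg + Bh) Bg (by omega) (fun k hk hkne => ?_)
      (by rw [h0, hMB]; exact hMne)).trans (by rw [h0, hMB])
    rw [h0, hMB]
    rcases lt_or_gt_of_ne hkne with hlt | hgt
    · have hk' : Bh < Bg + Bh - k := by omega
      rcases eq_or_ne (W g k) ⊤ with he | he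
      · calc W g Ag + W h Ah < ⊤ := lt_top_iff_ne_top.mpr hMne
          _ = W g k + W h (Bg + Bh - k) := by rw [he, top_add]
      · calc W g Ag + W h Ah ≤ W g k + W h Ah := add_le_add_left (hgmin k) _
          _ < W g k + W h (Bg + Bh - k) :=
              WithTop.add_lt_add_of_le_of_lt he le_rfl (hhB' _ hk' hMhne)
    · exact WithTop.add_lt_add_of_lt_of_le hMhne (hgB' k hgt hMgne) (hhmin _)
  -- identify M = n*ys and A-sum, B-sum ∈ {s, n}
  have hMval : W g Ag + W h Ah = (((n : ℤ) * ys : ℤ) : WithTop ℤ) :=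
    le_antisymm hMle (hAeq ▸ hWfge (Ag + Ah))
  have hmemA : Ag + Ah = s ∨ Ag + Ah = n := by
    by_contra hc
    push_neg at hc
    have := hWfother _ hc.1 hc.2
    rw [hAeq, hMval] at this
    exact lt_irrefl _ this
  have hmemB : Bg + Bh = s ∨ Bg + Bh = n := by
    by_contra hc
    push_neg at hc
    have := hWfother _ hc.1 hc.2
    rw [hBeq, hMval] at this
    exact lt_irrefl _ this
  -- A-sum = s
  have hAs : Ag + Ah = s := by
    rcases hmemA with h' | h'
    · exact h'
    · exfalso
      have hlt : W g Ag + W h Ah < W f s := by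
        refine key_gt s (fun k hk => ?_)
        have hkm : k ≤ s := by have := Finset.mem_range.mp hk; omega
        rcases lt_or_ge k Ag with hlt | hle
        · exact WithTop.add_lt_add_of_lt_of_le hMhne (hgA k hlt) (hhmin _)
        · have hk' : s - k < Ah := by omega
          exact WithTop.add_lt_add_of_le_of_lt hMgne (hgmin k) (hhA _ hk')
      rw [hWfs, hMval] at hlt
      exact lt_irrefl _ hlt
  -- B-sum = n
  have hBn : Bg + Bh = n := by
    rcases hmemB with h' | h'
    · exfalso
      have hlt : W g Ag + W h Ah < W f n := by
        refine key_gt n (fun k hk => ?_)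
        have hkm : k ≤ n := by have := Finset.mem_range.mp hk; omega
        rcases le_or_gt k Bg with hle | hgt
        · have hk' : Bh < n - k := by omega
          rcases eq_or_ne (W g k) ⊤ with he | he
          · calc W g Ag + W h Ah < ⊤ := lt_top_iff_ne_top.mpr hMne
              _ = W g k + W h (n - k) := by rw [he, top_add]
          · calc W g Ag + W h Ah ≤ W g k + W h Ah := add_le_add_left (hgmin k) _
              _ < W g k + W h (n - k) :=
                  WithTop.add_lt_add_of_le_of_lt he le_rfl (hhB' _ hk' hMhne)
        · exact WithTop.add_lt_add_of_lt_of_le hMhne (hgB' k hgt hMgne) (hhmin _)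
      rw [hWfn, hMval] at hlt
      exact lt_irrefl _ hlt
    · exact h'
  -- divisibility of segment lengths
  have hdvd : ∀ (p : R[X]) (A B : ℕ), A ≤ B → W p B = W p A → W p A ≠ ⊤ →
      ns / Int.gcd (ns : ℤ) ys ∣ B - A := by
    intro p A B hAB heq hne
    have hvAne : v (p.coeff A) ≠ ⊤ := by
      intro e
      rw [hW] at hne; dsimp only at hne
      rw [e, wt_top hns0, top_add] at hne
      exact hne rfl
    have hvBne : v (p.coeff B) ≠ ⊤ := by
      intro e
      rw [hW] at heq; dsimp only at heq
      rw [e, wt_top hns0, top_add] at heq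
      rw [hW] at hne; dsimp only at hne
      exact hne heq.symm
    obtain ⟨xA, hxA⟩ := WithTop.ne_top_iff_exists.mp hvAne
    obtain ⟨xB, hxB⟩ := WithTop.ne_top_iff_exists.mp hvBne
    have heq2 : (ns : ℤ) * xA + (A : ℤ) * ys = (ns : ℤ) * xB + (B : ℤ) * ys := by
      rw [hW] at heq; dsimp only at heq
      rw [← hxA, ← hxB, wt_coe, wt_coe, ← WithTop.coe_add, ← WithTop.coe_add] at heq
      exact_mod_cast heq.symm
    exact dvd_sub_of_eq hns0 hAB heq2
  have hdg : ns / Int.gcd (ns : ℤ) ys ∣ Bg - Ag := hdvd g Ag Bg hABg hgB hMgne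
  have hdh : ns / Int.gcd (ns : ℤ) ys ∣ Bh - Ah := hdvd h Ah Bh hABh hhB hMhne
  -- conclude
  rw [hnscast]
  have hsum : (Bg - Ag) + (Bh - Ah) = ns := by omega
  have hq0 : 0 < (Bg - Ag) + (Bh - Ah) := by omega
  rcases Nat.eq_zero_or_pos (Bg - Ag) with hz | hpos
  · have hposh : 0 < Bh - Ah := by omega
    have := Nat.le_of_dvd hposh hdh
    have hle : ns / Int.gcd (ns : ℤ) ys ≤ h.natDegree := le_trans this (by omega)
    exact le_trans hle (le_max_right _ _)
  · have := Nat.le_of_dvd hpos hdg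
    have hle : ns / Int.gcd (ns : ℤ) ys ≤ g.natDegree := le_trans this (by omega)
    exact le_trans hle (le_max_left _ _)
end
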